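/- (Van der Corput lemma for sequences.) Let G be a second countable topological group with right-invariant Borel measure μ, and {Λₙ} a uniformly space-filling sequence in a Borel subsemigroup K of G. Let f : G → 𝔥 be bounded into a Hilbert space 𝔥, with ⟨f(·), x⟩ Borel for each x ∈ 𝔥 and (g,h) ↦ ⟨f(g), f(h)⟩ Borel on G². Assume γ_h := lim_{n→∞} (1/μ(Λₙ)) ∫_{Λₙ} ⟨f(g), f(gh)⟩ dg exists for all h ∈ G, and that lim_{m→∞} (1/μ(Λₘ)²) ∫_{Λₘ} ∫_{Λₘ} γ_{h₁⁻¹ h₂} dh₁ dh₂ = 0. Then lim_{n→∞} (1/μ(Λₙ)) ∫_{Λₙ} f dμ = 0 in the norm of 𝔥. -/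

import Mathlib

open MeasureTheory Filter
open scoped ENNReal RealInnerProductSpace Topology
set_option linter.unusedSectionVars false
set_option linter.unusedVariables false
set_option maxHeartbeats 1000000

section helpers
variable {G : Type*} [MeasurableSpace G] (μ : Measure G)
variable {E : Type*} [NormedAddCommGroup E] [NormedSpace ℝ E] [CompleteSpace E]

lemma vdc_integrableOn_of_bound {s : Set G} (hsf : μ s < ∞) {φ : G → E}
    (hφ : AEStronglyMeasurable φ (μ.restrict s)) {C : ℝ} (hC : ∀ g, ‖φ g‖ ≤ C) :
    IntegrableOn φ s μ := by
  haveI : IsFiniteMeasure (μ.restrict s) :=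
    ⟨by rwa [Measure.restrict_apply_univ]⟩
  exact Integrable.mono' (integrable_const C) hφ (ae_of_all _ hC)

lemma vdc_setIntegral_sub_le {φ : G → E} {C : ℝ} (hC : ∀ g, ‖φ g‖ ≤ C) (C0 : 0 ≤ C)
    {s t : Set G} (hs : MeasurableSet s) (ht : MeasurableSet t)
    (hsf : μ s < ∞) (htf : μ t < ∞)
    (hs' : IntegrableOn φ s μ) (ht' : IntegrableOn φ t μ) :
    ‖(∫ g in s, φ g ∂μ) - ∫ g in t, φ g ∂μ‖ ≤ C * (μ (symmDiff s t)).toReal := by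
  have hst : μ (s ∩ t) ≠ ∞ := (lt_of_le_of_lt (measure_mono Set.inter_subset_left) hsf).ne
  have h1 : ∫ g in s, φ g ∂μ = (∫ g in s ∩ t, φ g ∂μ) + ∫ g in s \ t, φ g ∂μ := by
    rw [← setIntegral_union (Set.disjoint_left.mpr fun x hx hx2 => hx2.2 hx.2)]
    · rw [Set.inter_union_diff]
    · exact hs.diff ht
    · exact hs'.mono_set Set.inter_subset_left
    · exact hs'.mono_set (Set.diff_subset)
  have h2 : ∫ g in t, φ g ∂μ = (∫ g in s ∩ t, φ g ∂μ) + ∫ g in t \ s, φ g ∂μ := by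
    rw [← setIntegral_union]
    · rw [Set.inter_comm, Set.inter_union_diff]
    · exact Set.disjoint_left.mpr fun x hx hx2 => hx2.2 hx.1
    · exact ht.diff hs
    · exact ht'.mono_set Set.inter_subset_right
    · exact ht'.mono_set (Set.diff_subset)
  rw [h1, h2]
  have e : (∫ g in s ∩ t, φ g ∂μ) + (∫ g in s \ t, φ g ∂μ)
      - ((∫ g in s ∩ t, φ g ∂μ) + ∫ g in t \ s, φ g ∂μ)
      = (∫ g in s \ t, φ g ∂μ) - ∫ g in t \ s, φ g ∂μ := by abel
  rw [e]
  have b1 : ‖∫ g in s \ t, φ g ∂μ‖ ≤ C * (μ (s \ t)).toReal :=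
    norm_setIntegral_le_of_norm_le_const (lt_of_le_of_lt (measure_mono Set.diff_subset) hsf)
      (fun x _ => hC x)
  have b2 : ‖∫ g in t \ s, φ g ∂μ‖ ≤ C * (μ (t \ s)).toReal :=
    norm_setIntegral_le_of_norm_le_const (lt_of_le_of_lt (measure_mono Set.diff_subset) htf)
      (fun x _ => hC x)
  have hsd : μ (symmDiff s t) = μ (s \ t) + μ (t \ s) := by
    rw [Set.symmDiff_def]
    exact measure_union (disjoint_sdiff_sdiff) (ht.diff hs)
  calc ‖(∫ g in s \ t, φ g ∂μ) - ∫ g in t \ s, φ g ∂μ‖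
      ≤ ‖∫ g in s \ t, φ g ∂μ‖ + ‖∫ g in t \ s, φ g ∂μ‖ := norm_sub_le _ _
    _ ≤ C * (μ (s \ t)).toReal + C * (μ (t \ s)).toReal := add_le_add b1 b2
    _ = C * (μ (symmDiff s t)).toReal := by
        rw [hsd, ENNReal.toReal_add, mul_add]
        · exact (lt_of_le_of_lt (measure_mono Set.diff_subset) hsf).ne
        · exact (lt_of_le_of_lt (measure_mono Set.diff_subset) htf).ne

lemma vdc_sq_integral_le [IsFiniteMeasure μ] (u : G → ℝ)
    (hm : AEStronglyMeasurable u μ) (h0 : ∀ x, 0 ≤ u x) {C : ℝ} (hC : ∀ x, u x ≤ C) :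
    (∫ x, u x ∂μ) ^ 2 ≤ (μ Set.univ).toReal * ∫ x, (u x) ^ 2 ∂μ := by
  have hmem2 : MemLp u 2 μ :=
    MemLp.of_bound hm C (ae_of_all _ fun x => by
      rw [Real.norm_eq_abs, abs_of_nonneg (h0 x)]; exact hC x)
  have hone : MemLp (fun _ : G => (1 : ℝ)) 2 μ := memLp_const 1
  set F := hmem2.toLp u with hF
  set O := hone.toLp _ with hO
  have h1 : ⟪F, O⟫ = ∫ x, u x ∂μ := by
    rw [L2.inner_def]
    refine integral_congr_ae ?_
    filter_upwards [hmem2.coeFn_toLp, hone.coeFn_toLp] with x hx hy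
    simp only [hF, hO, hx, hy]; simp [RCLike.inner_apply]
  have h2 : ⟪F, F⟫ = ∫ x, (u x) ^ 2 ∂μ := by
    rw [L2.inner_def]
    refine integral_congr_ae ?_
    filter_upwards [hmem2.coeFn_toLp] with x hx
    simp [hF, hx, RCLike.inner_apply, sq]
  have h3 : ⟪O, O⟫ = (μ Set.univ).toReal := by
    rw [L2.inner_def]
    have : ∀ᵐ x ∂μ, ⟪(O : G → ℝ) x, (O : G → ℝ) x⟫ = 1 := by
      filter_upwards [hone.coeFn_toLp] with x hx
      simp only [hO, hx]; simp [RCLike.inner_apply]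
    rw [integral_congr_ae this]
    simp [measureReal_def]
  have key := real_inner_mul_inner_self_le F O
  rw [h1, h2, h3] at key
  calc (∫ x, u x ∂μ) ^ 2 = (∫ x, u x ∂μ) * (∫ x, u x ∂μ) := sq _
    _ ≤ (∫ x, (u x) ^ 2 ∂μ) * (μ Set.univ).toReal := key
    _ = (μ Set.univ).toReal * ∫ x, (u x) ^ 2 ∂μ := mul_comm _ _

end helpers

section grouphelpers
variable {G : Type*} [TopologicalSpace G] [Group G] [IsTopologicalGroup G]
  [SecondCountableTopology G] [MeasurableSpace G] [BorelSpace G]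
  (μ : Measure G) [μ.IsMulRightInvariant]
variable {E : Type*} [NormedAddCommGroup E] [NormedSpace ℝ E] [CompleteSpace E]

lemma vdc_meas_image (s : Set G) (hs : MeasurableSet s) (h : G) :
    MeasurableSet ((· * h) '' s) := by
  rw [Set.image_mul_right]; exact (measurable_mul_const h⁻¹) hs

lemma vdc_measure_image (s : Set G) (hs : MeasurableSet s) (h : G) :
    μ ((· * h) '' s) = μ s := by
  rw [Set.image_mul_right]
  exact (measurePreserving_mul_right μ h⁻¹).measure_preimage hs.nullMeasurableSet

lemma vdc_slide (φ : G → E) (s : Set G) (h : G) :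
    ∫ g in (· * h) '' s, φ g ∂μ = ∫ g in s, φ (g * h) ∂μ :=
  (measurePreserving_mul_right μ h).setIntegral_image_emb
    (MeasurableEquiv.mulRight h).measurableEmbedding φ s

end grouphelpers

/-- Theorem 2.7′: van der Corput lemma for a uniformly space-filling sequence
`Λₙ` in a Borel subsemigroup `K` of a second countable topological group with
right invariant measure: if the correlation averages of a bounded weakly
measurable `f : G → H` converge to `γ h`, and the normalized double averages of
`γ(h₁⁻¹h₂)` tend to `0`, then the normalized averages of `f` tend to `0`. -/
theorem van_der_corput
    {G : Type*} [TopologicalSpace G] [Group G] [IsTopologicalGroup G]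
    [SecondCountableTopology G] [MeasurableSpace G] [BorelSpace G]
    (μ : Measure G) [μ.IsMulRightInvariant]
    {H : Type*} [NormedAddCommGroup H] [InnerProductSpace ℝ H] [CompleteSpace H]
    (K : Set G) (hK : MeasurableSet K) (hKmul : ∀ a ∈ K, ∀ b ∈ K, a * b ∈ K)
    (Λ : ℕ → Set G) (hΛK : ∀ n, Λ n ⊆ K) (hΛm : ∀ n, MeasurableSet (Λ n))
    (hfin : ∀ n, μ (Λ n) < ⊤) (hpos : ∀ᶠ n in atTop, 0 < μ (Λ n))
    (hFolner : ∀ g ∈ K,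
      Tendsto (fun n => (μ (symmDiff (Λ n) ((· * g) '' Λ n))).toReal / (μ (Λ n)).toReal)
        atTop (𝓝 0))
    (hUnif : ∀ m : ℕ,
      Tendsto (fun n => (⨆ g ∈ Λ m, (μ (symmDiff (Λ n) ((· * g) '' Λ n))).toReal)
          / (μ (Λ n)).toReal)
        atTop (𝓝 0))
    (f : G → H) (C : ℝ) (hC : ∀ g, ‖f g‖ ≤ C)
    (hfw : ∀ x : H, Measurable fun g => ⟪f g, x⟫)
    (hfs : StronglyMeasurable f)
    (hF : Measurable fun p : G × G => ⟪f p.1, f p.2⟫)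
    (γ : G → ℝ)
    (hγ : ∀ h : G,
      Tendsto (fun n => (μ (Λ n)).toReal⁻¹ * ∫ g in Λ n, ⟪f g, f (g * h)⟫ ∂μ)
        atTop (𝓝 (γ h)))
    (hγavg : Tendsto
      (fun m => ((μ (Λ m)).toReal ^ 2)⁻¹ *
        ∫ h₂ in Λ m, ∫ h₁ in Λ m, γ (h₁⁻¹ * h₂) ∂μ ∂μ)
      atTop (𝓝 0)) :
    Tendsto (fun n => (μ (Λ n)).toReal⁻¹ • ∫ g in Λ n, f g ∂μ) atTop (𝓝 (0 : H)) := by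
  classical
  have C0 : 0 ≤ C := le_trans (norm_nonneg _) (hC 1)
  set a : ℕ → ℝ := fun n => (μ (Λ n)).toReal with ha
  have ha0 : ∀ n, 0 ≤ a n := fun n => ENNReal.toReal_nonneg
  have hres : ∀ n, IsFiniteMeasure (μ.restrict (Λ n)) := fun n =>
    ⟨by rw [Measure.restrict_apply_univ]; exact hfin n⟩
  have hfint : ∀ n, IntegrableOn f (Λ n) μ := fun n =>
    vdc_integrableOn_of_bound μ (hfin n) hfs.aestronglyMeasurable.restrict hC
  have hQb : ∀ u v : G, |⟪f u, f v⟫| ≤ C ^ 2 := fun u v => by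
    calc |⟪f u, f v⟫| ≤ ‖f u‖ * ‖f v‖ := abs_real_inner_le_norm _ _
      _ ≤ C * C := mul_le_mul (hC u) (hC v) (norm_nonneg _) C0
      _ = C ^ 2 := (sq C).symm
  have hC2 : (0:ℝ) ≤ C ^ 2 := sq_nonneg C
  -- the correlation averages
  set c : ℕ → G × G → ℝ := fun n p =>
    (a n)⁻¹ * ∫ g in Λ n, ⟪f (g * p.2), f (g * p.1)⟫ ∂μ with hc
  -- boundedness of c
  have hinvmul : ∀ n, (a n)⁻¹ * a n ≤ 1 := by
    intro n
    rcases eq_or_lt_of_le (ha0 n) with h | h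
    · simp [← h]
    · rw [inv_mul_cancel₀ h.ne']
  have hcb : ∀ n p, |c n p| ≤ C ^ 2 := by
    intro n p
    have hb : ‖∫ g in Λ n, ⟪f (g * p.2), f (g * p.1)⟫ ∂μ‖ ≤ C ^ 2 * a n :=
      norm_setIntegral_le_of_norm_le_const (hfin n)
        (fun g _ => by rw [Real.norm_eq_abs]; exact hQb _ _)
    rw [hc]
    calc |(a n)⁻¹ * ∫ g in Λ n, ⟪f (g * p.2), f (g * p.1)⟫ ∂μ|
        = (a n)⁻¹ * |∫ g in Λ n, ⟪f (g * p.2), f (g * p.1)⟫ ∂μ| := by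
          rw [abs_mul, abs_of_nonneg (inv_nonneg.2 (ha0 n))]
      _ ≤ (a n)⁻¹ * (C ^ 2 * a n) := by
          refine mul_le_mul_of_nonneg_left ?_ (inv_nonneg.2 (ha0 n))
          rwa [Real.norm_eq_abs] at hb
      _ = C ^ 2 * ((a n)⁻¹ * a n) := by ring
      _ ≤ C ^ 2 * 1 := mul_le_mul_of_nonneg_left (hinvmul n) hC2
      _ = C ^ 2 := mul_one _
  -- strong measurability of c n
  have hcmeas : ∀ n, StronglyMeasurable (c n) := by
    intro n
    haveI := hres n
    have h1 : Measurable (fun z : (G × G) × G => ⟪f (z.2 * z.1.2), f (z.2 * z.1.1)⟫) :=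
      hF.comp ((measurable_snd.mul measurable_fst.snd).prodMk
        (measurable_snd.mul measurable_fst.fst))
    have h2 : StronglyMeasurable
        (fun p : G × G => ∫ g, ⟪f (g * p.2), f (g * p.1)⟫ ∂(μ.restrict (Λ n))) :=
      h1.stronglyMeasurable.integral_prod_right'
    exact h2.const_mul _
  -- pointwise convergence of c to γ
  have hconv : ∀ p : G × G, p.1 ∈ K → p.2 ∈ K →
      Tendsto (fun n => c n p) atTop (𝓝 (γ (p.2⁻¹ * p.1))) := by
    intro p hp1 hp2
    set h : G := p.2⁻¹ * p.1 with hh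
    set q : G → ℝ := fun g => ⟪f g, f (g * h)⟫ with hq
    have hqmeas : Measurable q :=
      hF.comp (measurable_id.prodMk (measurable_mul_const h))
    have hqb : ∀ g, ‖q g‖ ≤ C ^ 2 := fun g => by
      rw [Real.norm_eq_abs]; exact hQb _ _
    have himg : ∀ n, MeasurableSet ((· * p.2) '' Λ n) := fun n =>
      vdc_meas_image _ (hΛm n) _
    have himgfin : ∀ n, μ ((· * p.2) '' Λ n) < ∞ := fun n => by
      rw [vdc_measure_image μ _ (hΛm n)]; exact hfin n
    have hqint1 : ∀ n, IntegrableOn q (Λ n) μ := fun n =>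
      vdc_integrableOn_of_bound μ (hfin n) hqmeas.stronglyMeasurable.aestronglyMeasurable.restrict hqb
    have hqint2 : ∀ n, IntegrableOn q ((· * p.2) '' Λ n) μ := fun n =>
      vdc_integrableOn_of_bound μ (himgfin n) hqmeas.stronglyMeasurable.aestronglyMeasurable.restrict hqb
    have E1 : ∀ n, ∫ g in Λ n, ⟪f (g * p.2), f (g * p.1)⟫ ∂μ
        = ∫ g in (· * p.2) '' Λ n, q g ∂μ := by
      intro n
      rw [vdc_slide μ q (Λ n) p.2]
      refine setIntegral_congr_fun (hΛm n) (fun g _ => ?_)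
      show ⟪f (g * p.2), f (g * p.1)⟫ = ⟪f (g * p.2), f (g * p.2 * (p.2⁻¹ * p.1))⟫
      rw [mul_assoc, mul_inv_cancel_left]
    have key : ∀ n, ‖c n p - (a n)⁻¹ * ∫ g in Λ n, q g ∂μ‖
        ≤ C ^ 2 * ((μ (symmDiff (Λ n) ((· * p.2) '' Λ n))).toReal / a n) := by
      intro n
      rw [Real.norm_eq_abs]
      have hd : ‖(∫ g in (· * p.2) '' Λ n, q g ∂μ) - ∫ g in Λ n, q g ∂μ‖
          ≤ C ^ 2 * (μ (symmDiff ((· * p.2) '' Λ n) (Λ n))).toReal :=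
        vdc_setIntegral_sub_le μ hqb hC2 (himg n) (hΛm n) (himgfin n) (hfin n)
          (hqint2 n) (hqint1 n)
      rw [symmDiff_comm] at hd
      rw [hc]
      show |(a n)⁻¹ * (∫ g in Λ n, ⟪f (g * p.2), f (g * p.1)⟫ ∂μ)
          - (a n)⁻¹ * ∫ g in Λ n, q g ∂μ| ≤ _
      rw [E1 n, ← mul_sub, abs_mul, abs_of_nonneg (inv_nonneg.2 (ha0 n))]
      calc (a n)⁻¹ * |(∫ g in (· * p.2) '' Λ n, q g ∂μ) - ∫ g in Λ n, q g ∂μ|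
          ≤ (a n)⁻¹ * (C ^ 2 * (μ (symmDiff (Λ n) ((· * p.2) '' Λ n))).toReal) := by
            refine mul_le_mul_of_nonneg_left ?_ (inv_nonneg.2 (ha0 n))
            rwa [Real.norm_eq_abs] at hd
        _ = C ^ 2 * ((μ (symmDiff (Λ n) ((· * p.2) '' Λ n))).toReal / a n) := by
            rw [div_eq_inv_mul]; ring
    have t1 : Tendsto (fun n => c n p - (a n)⁻¹ * ∫ g in Λ n, q g ∂μ) atTop (𝓝 0) := by
      have h0 := (hFolner p.2 hp2).const_mul (C ^ 2)
      rw [mul_zero] at h0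
      exact squeeze_zero_norm key h0
    have t2 := hγ h
    have := t1.add t2
    rw [zero_add] at this
    refine this.congr (fun n => ?_)
    simp [hq, ha]
  rw [NormedAddCommGroup.tendsto_nhds_zero]
  intro ε hε
  have h8 : (0:ℝ) < ε ^ 2 / 8 := by positivity
  obtain ⟨m, hm_avg, hm_pos⟩ := ((hγavg.eventually (gt_mem_nhds h8)).and hpos).exists
  have ham : a m ≠ 0 := (ENNReal.toReal_pos hm_pos.ne' (hfin m).ne).ne'
  have ham0 : 0 < a m := ENNReal.toReal_pos hm_pos.ne' (hfin m).ne
  haveI := hres m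
  -- the double-averaging comparison sequence
  set B : ℕ → H := fun n =>
    (a m)⁻¹ • ((a n)⁻¹ • ∫ h in Λ m, (∫ g in Λ n, f (g * h) ∂μ) ∂μ) with hB
  -- the uniform sup bound
  set S : ℕ → ℝ := fun n => ⨆ g ∈ Λ m, (μ (symmDiff (Λ n) ((· * g) '' Λ n))).toReal with hS
  have hv2 : ∀ n (h : G), (μ (symmDiff (Λ n) ((· * h) '' Λ n))).toReal ≤ 2 * a n := by
    intro n h
    have h1 : μ (symmDiff (Λ n) ((· * h) '' Λ n)) ≤ μ (Λ n) + μ (Λ n) :=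
      calc μ (symmDiff (Λ n) ((· * h) '' Λ n))
          ≤ μ (Λ n ∪ (· * h) '' Λ n) := measure_mono Set.symmDiff_subset_union
        _ ≤ μ (Λ n) + μ ((· * h) '' Λ n) := measure_union_le _ _
        _ = μ (Λ n) + μ (Λ n) := by rw [vdc_measure_image μ _ (hΛm n)]
    calc (μ (symmDiff (Λ n) ((· * h) '' Λ n))).toReal
        ≤ (μ (Λ n) + μ (Λ n)).toReal := by
          refine ENNReal.toReal_mono ?_ h1
          exact (ENNReal.add_lt_top.2 ⟨hfin n, hfin n⟩).ne
      _ = 2 * a n := by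
          rw [ENNReal.toReal_add (hfin n).ne (hfin n).ne]; ring
  have hSbdd : ∀ n, BddAbove (Set.range fun h : G =>
      ⨆ _ : h ∈ Λ m, (μ (symmDiff (Λ n) ((· * h) '' Λ n))).toReal) := by
    intro n
    refine ⟨2 * a n, ?_⟩
    rintro x ⟨h, rfl⟩
    show (⨆ _ : h ∈ Λ m, (μ (symmDiff (Λ n) ((· * h) '' Λ n))).toReal) ≤ 2 * a n
    by_cases hh : h ∈ Λ m
    · rw [ciSup_pos hh]; exact hv2 n h
    · haveI : IsEmpty (h ∈ Λ m) := ⟨hh⟩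
      rw [Real.iSup_of_isEmpty]
      positivity
  have hSle : ∀ n, ∀ h ∈ Λ m, (μ (symmDiff (Λ n) ((· * h) '' Λ n))).toReal ≤ S n := by
    intro n h hh
    refine le_ciSup_of_le (hSbdd n) h ?_
    exact le_ciSup_of_le ⟨(μ (symmDiff (Λ n) ((· * h) '' Λ n))).toReal,
      by rintro x ⟨_, rfl⟩; exact le_rfl⟩ hh le_rfl
  -- Part 1: ‖A n - B n‖ is eventually small
  have hAB : ∀ n, ‖(a n)⁻¹ • (∫ g in Λ n, f g ∂μ) - B n‖ ≤ C * (S n / a n) := by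
    intro n
    haveI := hres n
    set I₀ : H := ∫ g in Λ n, f g ∂μ with hI₀
    set T : G → H := fun h => ∫ g in Λ n, f (g * h) ∂μ with hT
    have hTm : StronglyMeasurable T := by
      have h1 : StronglyMeasurable (fun z : G × G => f (z.2 * z.1)) :=
        hfs.comp_measurable (measurable_snd.mul measurable_fst)
      exact h1.integral_prod_right'
    have hTb : ∀ h, ‖T h‖ ≤ C * a n := fun h =>
      norm_setIntegral_le_of_norm_le_const (hfin n) (fun g _ => hC _)
    have hTint : IntegrableOn T (Λ m) μ :=
      vdc_integrableOn_of_bound μ (hfin m) hTm.aestronglyMeasurable.restrict hTb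
    have hdiff : ∀ h ∈ Λ m, ‖I₀ - T h‖ ≤ C * S n := by
      intro h hh
      have himg : MeasurableSet ((· * h) '' Λ n) := vdc_meas_image _ (hΛm n) _
      have himgfin : μ ((· * h) '' Λ n) < ∞ := by
        rw [vdc_measure_image μ _ (hΛm n)]; exact hfin n
      have hfimg : IntegrableOn f ((· * h) '' Λ n) μ :=
        vdc_integrableOn_of_bound μ himgfin hfs.aestronglyMeasurable.restrict hC
      have h1 : ‖I₀ - ∫ g in (· * h) '' Λ n, f g ∂μ‖
          ≤ C * (μ (symmDiff (Λ n) ((· * h) '' Λ n))).toReal :=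
        vdc_setIntegral_sub_le μ hC C0 (hΛm n) himg (hfin n) himgfin (hfint n) hfimg
      rw [vdc_slide μ f (Λ n) h] at h1
      exact h1.trans (mul_le_mul_of_nonneg_left (hSle n h hh) C0)
    have heq : (a n)⁻¹ • I₀ - B n
        = ((a m)⁻¹ * (a n)⁻¹) • ∫ h in Λ m, (I₀ - T h) ∂μ := by
      rw [integral_sub (integrableOn_const (C := I₀) (hfin m).ne) hTint, setIntegral_const]
      rw [hB]
      show (a n)⁻¹ • I₀ - (a m)⁻¹ • ((a n)⁻¹ • ∫ h in Λ m, T h ∂μ) = _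
      rw [smul_sub, smul_smul, smul_smul]
      congr 1
      rw [show (a m)⁻¹ * (a n)⁻¹ * μ.real (Λ m) = (a n)⁻¹ from by
        show (a m)⁻¹ * (a n)⁻¹ * a m = (a n)⁻¹
        rw [mul_comm ((a m)⁻¹) ((a n)⁻¹), mul_assoc, inv_mul_cancel₀ ham, mul_one]]
    rw [heq]
    have hnorm : ‖∫ h in Λ m, (I₀ - T h) ∂μ‖ ≤ (C * S n) * a m :=
      norm_setIntegral_le_of_norm_le_const (hfin m) hdiff
    rw [norm_smul, Real.norm_eq_abs,
      abs_of_nonneg (mul_nonneg (inv_nonneg.2 (ha0 m)) (inv_nonneg.2 (ha0 n)))]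
    calc (a m)⁻¹ * (a n)⁻¹ * ‖∫ h in Λ m, (I₀ - T h) ∂μ‖
        ≤ (a m)⁻¹ * (a n)⁻¹ * ((C * S n) * a m) := by
          refine mul_le_mul_of_nonneg_left hnorm ?_
          exact mul_nonneg (inv_nonneg.2 (ha0 m)) (inv_nonneg.2 (ha0 n))
      _ = ((a m)⁻¹ * a m) * (C * (S n / a n)) := by
          rw [div_eq_mul_inv]; ring
      _ = C * (S n / a n) := by rw [inv_mul_cancel₀ ham, one_mul]
  have hEV1 : ∀ᶠ n in atTop, ‖(a n)⁻¹ • (∫ g in Λ n, f g ∂μ) - B n‖ < ε / 2 := by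
    have h1 : Tendsto (fun n => C * (S n / a n)) atTop (𝓝 0) := by
      have h0 := (hUnif m).const_mul C
      rw [mul_zero] at h0
      exact h0
    filter_upwards [h1.eventually (gt_mem_nhds (by positivity : (0:ℝ) < ε / 2))] with n hn
    exact lt_of_le_of_lt (hAB n) hn
  -- Part 2: ‖B n‖ is eventually small
  set ρ : Measure (G × G) := (μ.restrict (Λ m)).prod (μ.restrict (Λ m)) with hρ
  haveI : IsFiniteMeasure ρ := by rw [hρ]; infer_instance
  -- the chain inequality
  have hchain : ∀ n, 0 < μ (Λ n) → ‖B n‖ ^ 2 ≤ ((a m) ^ 2)⁻¹ * ∫ p, c n p ∂ρ := by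
    intro n hn
    haveI := hres n
    have han : 0 < a n := ENNReal.toReal_pos hn.ne' (hfin n).ne
    set T' : G → H := fun g => ∫ h in Λ m, f (g * h) ∂μ with hT'
    set ψ : G → H := fun g => (a m)⁻¹ • T' g with hψ
    have hT'm : StronglyMeasurable T' := by
      have h1 : StronglyMeasurable (fun z : G × G => f (z.1 * z.2)) :=
        hfs.comp_measurable (measurable_fst.mul measurable_snd)
      exact h1.integral_prod_right'
    have hT'b : ∀ g, ‖T' g‖ ≤ C * a m := fun g =>
      norm_setIntegral_le_of_norm_le_const (hfin m) (fun h _ => hC _)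
    have hψm : AEStronglyMeasurable ψ (μ.restrict (Λ n)) :=
      (hT'm.const_smul _).aestronglyMeasurable.restrict
    have hψb : ∀ g, ‖ψ g‖ ≤ C := by
      intro g
      rw [hψ]
      show ‖(a m)⁻¹ • T' g‖ ≤ C
      rw [norm_smul, Real.norm_eq_abs, abs_of_nonneg (inv_nonneg.2 (ha0 m))]
      calc (a m)⁻¹ * ‖T' g‖ ≤ (a m)⁻¹ * (C * a m) :=
            mul_le_mul_of_nonneg_left (hT'b g) (inv_nonneg.2 (ha0 m))
        _ = C * ((a m)⁻¹ * a m) := by ring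
        _ = C := by rw [inv_mul_cancel₀ ham, mul_one]
    -- swap to express B in terms of ψ
    have hint1 : Integrable (Function.uncurry fun h g => f (g * h))
        ((μ.restrict (Λ m)).prod (μ.restrict (Λ n))) := by
      refine Integrable.mono' (integrable_const C)
        ((hfs.comp_measurable (measurable_snd.mul measurable_fst)).aestronglyMeasurable)
        (ae_of_all _ fun z => hC _)
    have hswap : ∫ h in Λ m, (∫ g in Λ n, f (g * h) ∂μ) ∂μ = ∫ g in Λ n, T' g ∂μ :=
      integral_integral_swap hint1
    have hBψ : B n = (a n)⁻¹ • ∫ g in Λ n, ψ g ∂μ := by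
      rw [hB]
      show (a m)⁻¹ • ((a n)⁻¹ • ∫ h in Λ m, (∫ g in Λ n, f (g * h) ∂μ) ∂μ) = _
      rw [hswap, hψ]
      show _ = (a n)⁻¹ • ∫ g in Λ n, (a m)⁻¹ • T' g ∂μ
      rw [integral_smul, smul_comm]
    -- Cauchy-Schwarz
    have hcs : ‖∫ g in Λ n, ψ g ∂μ‖ ^ 2 ≤ a n * ∫ g in Λ n, ‖ψ g‖ ^ 2 ∂μ := by
      have h1 : ‖∫ g in Λ n, ψ g ∂μ‖ ≤ ∫ g in Λ n, ‖ψ g‖ ∂μ :=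
        norm_integral_le_integral_norm _
      have h2 : ‖∫ g in Λ n, ψ g ∂μ‖ ^ 2 ≤ (∫ g in Λ n, ‖ψ g‖ ∂μ) ^ 2 :=
        pow_le_pow_left₀ (norm_nonneg _) h1 2
      refine h2.trans ?_
      have h3 := vdc_sq_integral_le (μ.restrict (Λ n)) (fun g => ‖ψ g‖)
        hψm.norm (fun g => norm_nonneg _) hψb
      rwa [Measure.restrict_apply_univ] at h3
    -- expand ‖ψ g‖² as a double integral
    have hψsq : ∀ g, ‖ψ g‖ ^ 2
        = ((a m) ^ 2)⁻¹ * ∫ p, ⟪f (g * p.2), f (g * p.1)⟫ ∂ρ := by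
      intro g
      have hint2 : Integrable (fun h => f (g * h)) (μ.restrict (Λ m)) := by
        refine Integrable.mono' (integrable_const C)
          ((hfs.comp_measurable (measurable_const_mul g)).aestronglyMeasurable)
          (ae_of_all _ fun h => hC _)
      have hQint : Integrable (fun p : G × G => ⟪f (g * p.2), f (g * p.1)⟫) ρ := by
        refine Integrable.mono' (integrable_const (C ^ 2))
          ((hF.comp ((measurable_const_mul g |>.comp measurable_snd).prodMk
            (measurable_const_mul g |>.comp measurable_fst))).aestronglyMeasurable)
          (ae_of_all _ fun p => by rw [Real.norm_eq_abs]; exact hQb _ _)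
      have e0 : ‖T' g‖ ^ 2 = ⟪T' g, T' g⟫ := (real_inner_self_eq_norm_sq _).symm
      have e1 : ⟪T' g, T' g⟫ = ∫ h₂ in Λ m, ⟪T' g, f (g * h₂)⟫ ∂μ :=
        (integral_inner hint2 (T' g)).symm
      have e2 : ∀ h₂ : G, ⟪T' g, f (g * h₂)⟫
          = ∫ h₁ in Λ m, ⟪f (g * h₁), f (g * h₂)⟫ ∂μ := by
        intro h₂
        rw [real_inner_comm]
        rw [← integral_inner hint2 (f (g * h₂))]
        refine integral_congr_ae (ae_of_all _ fun h₁ => ?_)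
        exact real_inner_comm _ _
      have e3 : ∫ p, ⟪f (g * p.2), f (g * p.1)⟫ ∂ρ
          = ∫ h₂ in Λ m, ∫ h₁ in Λ m, ⟪f (g * h₁), f (g * h₂)⟫ ∂μ ∂μ := by
        rw [hρ]
        exact integral_prod _ hQint
      have e4 : ‖T' g‖ ^ 2 = ∫ p, ⟪f (g * p.2), f (g * p.1)⟫ ∂ρ := by
        rw [e0, e1, e3]
        exact integral_congr_ae (ae_of_all _ fun h₂ => e2 h₂)
      rw [hψ]
      show ‖(a m)⁻¹ • T' g‖ ^ 2 = _
      rw [norm_smul, Real.norm_eq_abs, abs_of_nonneg (inv_nonneg.2 (ha0 m)), mul_pow, e4,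
        ← inv_pow]
    -- swap the triple integral
    have hint3 : Integrable (Function.uncurry fun (g : G) (p : G × G) =>
        ⟪f (g * p.2), f (g * p.1)⟫) ((μ.restrict (Λ n)).prod ρ) := by
      refine Integrable.mono' (integrable_const (C ^ 2))
        ((hF.comp ((measurable_fst.mul measurable_snd.snd).prodMk
          (measurable_fst.mul measurable_snd.fst))).aestronglyMeasurable)
        (ae_of_all _ fun z => by rw [Real.norm_eq_abs]; exact hQb _ _)
    have hswap2 : ∫ g in Λ n, (∫ p, ⟪f (g * p.2), f (g * p.1)⟫ ∂ρ) ∂μ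
        = ∫ p, (∫ g in Λ n, ⟪f (g * p.2), f (g * p.1)⟫ ∂μ) ∂ρ :=
      integral_integral_swap hint3
    -- put everything together
    have hCn : ∫ p, c n p ∂ρ
        = (a n)⁻¹ * ∫ g in Λ n, (∫ p, ⟪f (g * p.2), f (g * p.1)⟫ ∂ρ) ∂μ := by
      rw [hswap2, hc]
      exact integral_const_mul _ _
    have hIψ : ∫ g in Λ n, ‖ψ g‖ ^ 2 ∂μ
        = ((a m) ^ 2)⁻¹ * ∫ g in Λ n, (∫ p, ⟪f (g * p.2), f (g * p.1)⟫ ∂ρ) ∂μ := by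
      rw [← integral_const_mul]
      exact integral_congr_ae (ae_of_all _ fun g => hψsq g)
    calc ‖B n‖ ^ 2 = ((a n)⁻¹) ^ 2 * ‖∫ g in Λ n, ψ g ∂μ‖ ^ 2 := by
          rw [hBψ, norm_smul, Real.norm_eq_abs, abs_of_nonneg (inv_nonneg.2 (ha0 n)), mul_pow]
      _ ≤ ((a n)⁻¹) ^ 2 * (a n * ∫ g in Λ n, ‖ψ g‖ ^ 2 ∂μ) := by
          refine mul_le_mul_of_nonneg_left hcs (by positivity)
      _ = ((a m) ^ 2)⁻¹ * ((a n)⁻¹ * ∫ g in Λ n, (∫ p, ⟪f (g * p.2), f (g * p.1)⟫ ∂ρ) ∂μ) := by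
          rw [hIψ]
          field_simp
      _ = ((a m) ^ 2)⁻¹ * ∫ p, c n p ∂ρ := by rw [hCn]
  -- dominated convergence for the double averages
  have hae : ∀ᵐ p ∂ρ, p ∈ (Λ m) ×ˢ (Λ m) := by
    have h0 : μ.restrict (Λ m) ((Λ m)ᶜ) = 0 := by
      rw [Measure.restrict_apply (hΛm m).compl, Set.compl_inter_self, measure_empty]
    have h1 : ρ ((Λ m ×ˢ Λ m)ᶜ) = 0 := by
      have hsub : (Λ m ×ˢ Λ m)ᶜ ⊆ ((Λ m)ᶜ ×ˢ (Set.univ : Set G)) ∪ ((Set.univ : Set G) ×ˢ (Λ m)ᶜ) := by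
        intro p hp
        rw [Set.mem_compl_iff, Set.mem_prod] at hp
        push_neg at hp
        by_cases h : p.1 ∈ Λ m
        · exact Or.inr ⟨Set.mem_univ _, hp h⟩
        · exact Or.inl ⟨h, Set.mem_univ _⟩
      refine le_antisymm ?_ zero_le
      refine le_trans (measure_mono hsub) ?_
      refine le_trans (measure_union_le _ _) ?_
      rw [hρ, Measure.prod_prod, Measure.prod_prod, h0]
      simp
    exact mem_ae_iff.mpr h1
  have htend_ae : ∀ᵐ p ∂ρ, Tendsto (fun n => c n p) atTop (𝓝 (γ (p.2⁻¹ * p.1))) := by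
    filter_upwards [hae] with p hp
    exact hconv p (hΛK m hp.1) (hΛK m hp.2)
  have hw_meas : AEStronglyMeasurable (fun p : G × G => γ (p.2⁻¹ * p.1)) ρ :=
    aestronglyMeasurable_of_tendsto_ae atTop (fun n => (hcmeas n).aestronglyMeasurable) htend_ae
  have hw_bdd : ∀ᵐ p ∂ρ, ‖γ (p.2⁻¹ * p.1)‖ ≤ C ^ 2 := by
    filter_upwards [htend_ae] with p hp
    exact le_of_tendsto hp.norm
      (Eventually.of_forall fun k => by rw [Real.norm_eq_abs]; exact hcb k p)
  have hw_int : Integrable (fun p : G × G => γ (p.2⁻¹ * p.1)) ρ :=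
    Integrable.mono' (integrable_const (C ^ 2)) hw_meas hw_bdd
  have hDtend : Tendsto (fun n => ∫ p, c n p ∂ρ) atTop
      (𝓝 (∫ p, γ (p.2⁻¹ * p.1) ∂ρ)) :=
    tendsto_integral_of_dominated_convergence (fun _ => C ^ 2)
      (fun n => (hcmeas n).aestronglyMeasurable) (integrable_const _)
      (fun n => ae_of_all _ fun p => by rw [Real.norm_eq_abs]; exact hcb n p) htend_ae
  have hwρ : ∫ p, γ (p.2⁻¹ * p.1) ∂ρ
      = ∫ h₂ in Λ m, ∫ h₁ in Λ m, γ (h₁⁻¹ * h₂) ∂μ ∂μ := by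
    have hw_int' := hw_int
    rw [hρ] at hw_int'
    rw [hρ]
    exact integral_prod _ hw_int'
  have hlt : ((a m) ^ 2)⁻¹ * ∫ p, γ (p.2⁻¹ * p.1) ∂ρ < ε ^ 2 / 8 := by
    rw [hwρ]; exact hm_avg
  have hEV2' : ∀ᶠ n in atTop, ((a m) ^ 2)⁻¹ * ∫ p, c n p ∂ρ < ε ^ 2 / 8 :=
    (hDtend.const_mul (((a m) ^ 2)⁻¹)).eventually (gt_mem_nhds hlt)
  have hEV2 : ∀ᶠ n in atTop, ‖B n‖ < ε / 2 := by
    filter_upwards [hEV2', hpos] with n h1 h2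
    have h3 := (hchain n h2).trans_lt h1
    nlinarith [norm_nonneg (B n), hε]
  filter_upwards [hEV1, hEV2] with n h1 h2
  calc ‖(a n)⁻¹ • ∫ g in Λ n, f g ∂μ‖
      = ‖((a n)⁻¹ • (∫ g in Λ n, f g ∂μ) - B n) + B n‖ := by rw [sub_add_cancel]
    _ ≤ ‖(a n)⁻¹ • (∫ g in Λ n, f g ∂μ) - B n‖ + ‖B n‖ := norm_add_le _ _
    _ < ε / 2 + ε / 2 := add_lt_add h1 h2
    _ = ε := add_halves ε
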